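/- Let H be a positive-integer random variable with finite second moment, let 0 ≤ ρ⁺ < 1, and set E[H^PR] = (E[H] − ρ⁺)/(1 − ρ⁺). Define the random variable R̃ on positive integers by P(R̃ = m) = P(H = m)/E[H^PR] + P(H > m)/((1 − ρ⁺)E[H^PR]). Then P(R̃ = ·) is a probability distribution and E[R̃] = (E[H]/E[H^PR])(1 + E[H̃]/(1 − ρ⁺)), where E[H̃] = E[H(H−1)]/(2E[H]). -/

import Mathlib

open Finset in
private lemma gauss_real (n : ℕ) :
    (∑ m ∈ Finset.range n, (m : ℝ)) = (n : ℝ) * ((n : ℝ) - 1) / 2 := by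
  induction n with
  | zero => simp
  | succ k ih =>
      rw [Finset.sum_range_succ, ih]
      push_cast
      ring

open Finset in
private lemma key_ennreal (g q : ℕ → ENNReal) :
    ∑' m, g m * ∑' k, q (m + 1 + k)
      = ∑' n, (∑ m ∈ Finset.range n, g m) * q n := by
  have h1 : ∀ m : ℕ, g m * ∑' k, q (m + 1 + k)
      = ∑' n, (if m < n then g m * q n else 0) := by
    intro m
    rw [← ENNReal.tsum_mul_left]
    rw [← Summable.sum_add_tsum_nat_add' (f := fun n => if m < n then g m * q n else 0)
      (k := m + 1) ENNReal.summable]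
    rw [Finset.sum_eq_zero, zero_add]
    · apply tsum_congr
      intro k
      rw [show k + (m + 1) = m + 1 + k by omega, if_pos (by omega)]
    · intro i hi
      have : ¬ m < i := by simp [Finset.mem_range] at hi; omega
      simp [this]
  calc ∑' m, g m * ∑' k, q (m + 1 + k)
      = ∑' m, ∑' n, (if m < n then g m * q n else 0) := tsum_congr h1
    _ = ∑' n, ∑' m, (if m < n then g m * q n else 0) := ENNReal.tsum_comm
    _ = ∑' n, (∑ m ∈ Finset.range n, g m) * q n := by
        apply tsum_congr
        intro n
        rw [tsum_eq_sum (s := Finset.range n) (by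
          intro m hm
          simp only [Finset.mem_range, not_lt] at hm
          simp [Nat.not_lt.mpr hm]), Finset.sum_mul]
        apply Finset.sum_congr rfl
        intro m hm
        simp [Finset.mem_range.mp hm]


/-- the remaining-service-time distribution
`P(R̃ = m) = P(H = m)/E[H^PR] + P(H > m)/((1 − ρ⁺)E[H^PR])` on positive integers
is a probability distribution with mean
`(E[H]/E[H^PR])(1 + E[H̃]/(1 − ρ⁺))`, where `E[H^PR] = (E[H] − ρ⁺)/(1 − ρ⁺)`
and `E[H̃] = E[H(H−1)]/(2E[H])`. -/
theorem stmt_8 (p : ℕ → ℝ) (hp0 : p 0 = 0) (hpnn : ∀ n, 0 ≤ p n)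
    (hsum : ∑' n : ℕ, p n = 1)
    (hmean : Summable (fun n : ℕ => (n : ℝ) * p n))
    (hmom2 : Summable (fun n : ℕ => (n : ℝ) ^ 2 * p n))
    (EH : ℝ) (hEH : EH = ∑' n : ℕ, (n : ℝ) * p n) (hEHpos : 0 < EH)
    (ρ : ℝ) (hρ0 : 0 ≤ ρ) (hρ1 : ρ < 1)
    (EHPR : ℝ) (hEHPR : EHPR = (EH - ρ) / (1 - ρ))
    (t : ℕ → ℝ) (ht : ∀ m : ℕ, t m = ∑' k : ℕ, p (m + 1 + k))
    (r : ℕ → ℝ) (hr : ∀ m : ℕ, r m = p m / EHPR + t m / ((1 - ρ) * EHPR))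
    (EHt : ℝ) (hEHt : EHt = (∑' n : ℕ, (n : ℝ) * ((n : ℝ) - 1) * p n) / (2 * EH)) :
    (∑' m : ℕ, r (m + 1) = 1) ∧
      ∑' m : ℕ, ((m : ℝ) + 1) * r (m + 1) = (EH / EHPR) * (1 + EHt / (1 - ρ)) := by
  -- basic summability
  have hps : Summable p := by
    by_contra h
    rw [tsum_eq_zero_of_not_summable h] at hsum
    norm_num at hsum
  -- EH ≥ 1
  have hEH1 : 1 ≤ EH := by
    rw [hEH, ← hsum]
    apply Summable.tsum_le_tsum _ hps hmean
    intro n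
    rcases Nat.eq_zero_or_pos n with h | h
    · simp [h, hp0]
    · have : (1:ℝ) ≤ n := by exact_mod_cast h
      nlinarith [hpnn n]
  have hρne : (1:ℝ) - ρ ≠ 0 := by linarith
  have hEHρ : (0:ℝ) < EH - ρ := by linarith
  have hEHPRpos : 0 < EHPR := by
    rw [hEHPR]; exact div_pos hEHρ (by linarith)
  -- ennreal setup
  set q : ℕ → ENNReal := fun n => ENNReal.ofReal (p n) with hq
  have hshift : ∀ m : ℕ, Summable (fun k => p (m + 1 + k)) := by
    intro m
    have := (summable_nat_add_iff (m + 1)).2 hps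
    exact this.congr (fun k => by rw [add_comm])
  have htnn : ∀ m, 0 ≤ t m := by
    intro m
    rw [ht m]
    exact tsum_nonneg (fun k => hpnn _)
  have hTof : ∀ m : ℕ, ∑' k, q (m + 1 + k) = ENNReal.ofReal (t m) := by
    intro m
    rw [ht m, ENNReal.ofReal_tsum_of_nonneg (fun k => hpnn _) (hshift m)]
  -- S2 summability
  have hS2sum : Summable (fun n : ℕ => (n : ℝ) * ((n : ℝ) - 1) * p n) := by
    have := hmom2.sub hmean
    exact this.congr (fun n => by ring)
  set S2 : ℝ := ∑' n : ℕ, (n : ℝ) * ((n : ℝ) - 1) * p n with hS2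
  have hS2nn : 0 ≤ S2 := by
    apply tsum_nonneg
    intro n
    have h1 : (0:ℝ) ≤ (n : ℝ) * ((n : ℝ) - 1) := by
      rcases Nat.eq_zero_or_pos n with h | h
      · simp [h]
      · have : (1:ℝ) ≤ n := by exact_mod_cast h
        nlinarith
    exact mul_nonneg h1 (hpnn n)
  -- key applications
  have E1 : ∑' m : ℕ, ENNReal.ofReal (t m) = ENNReal.ofReal EH := by
    have := key_ennreal (fun _ => 1) q
    simp only [one_mul] at this
    rw [← tsum_congr hTof, this]
    rw [hEH, ENNReal.ofReal_tsum_of_nonneg (fun n => mul_nonneg (Nat.cast_nonneg n) (hpnn n)) hmean]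
    apply tsum_congr
    intro n
    simp [ENNReal.ofReal_mul (Nat.cast_nonneg n : (0:ℝ) ≤ n), ENNReal.ofReal_natCast, hq]
  have E2 : ∑' m : ℕ, (m : ENNReal) * ENNReal.ofReal (t m) = ENNReal.ofReal (S2 / 2) := by
    have hkey := key_ennreal (fun m => (m : ENNReal)) q
    have this2 : ∑' m : ℕ, (m : ENNReal) * ENNReal.ofReal (t m)
        = ∑' n, (∑ m ∈ Finset.range n, (m : ENNReal)) * q n := by
      rw [← hkey]
      exact tsum_congr fun m => by rw [hTof]
    rw [this2]
    have hhalf : Summable (fun n : ℕ => (n : ℝ) * ((n : ℝ) - 1) / 2 * p n) := by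
      have := hS2sum.div_const 2
      exact this.congr (fun n => by ring)
    have hval : S2 / 2 = ∑' n : ℕ, (n : ℝ) * ((n : ℝ) - 1) / 2 * p n := by
      rw [hS2, ← tsum_div_const]
      exact tsum_congr (fun n => by ring)
    rw [hval, ENNReal.ofReal_tsum_of_nonneg (fun n => by
      apply mul_nonneg _ (hpnn n)
      rcases Nat.eq_zero_or_pos n with h | h
      · simp [h]
      · have : (1:ℝ) ≤ n := by exact_mod_cast h
        nlinarith) hhalf]
    apply tsum_congr
    intro n
    have hg : (∑ m ∈ Finset.range n, (m : ENNReal)) = ENNReal.ofReal ((n : ℝ) * ((n : ℝ) - 1) / 2) := by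
      rw [← gauss_real n, ENNReal.ofReal_sum_of_nonneg (fun m _ => Nat.cast_nonneg m)]
      exact Finset.sum_congr rfl (fun m _ => (ENNReal.ofReal_natCast m).symm)
    have hnn2 : (0:ℝ) ≤ (n : ℝ) * ((n : ℝ) - 1) / 2 := by
      rcases Nat.eq_zero_or_pos n with h | h
      · simp [h]
      · have h1 : (1:ℝ) ≤ n := by exact_mod_cast h
        nlinarith
    rw [hg, ← ENNReal.ofReal_mul hnn2]
  -- t 0 = 1
  have ht0 : t 0 = 1 := by
    rw [ht 0]
    have h := Summable.sum_add_tsum_nat_add' (f := p) (k := 1) ((summable_nat_add_iff 1).2 hps)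
    simp only [Finset.range_one, Finset.sum_singleton, hp0, zero_add] at h
    rw [hsum] at h
    rw [← h]
    exact tsum_congr (fun k => by rw [add_comm])
  -- shift identity for t-sums via ENNReal
  have hsplit1 : ∑' m : ℕ, ENNReal.ofReal (t m)
      = ENNReal.ofReal (t 0) + ∑' m : ℕ, ENNReal.ofReal (t (m + 1)) :=
    tsum_eq_zero_add' ENNReal.summable
  have hA_ne_top : (∑' m : ℕ, ENNReal.ofReal (t (m + 1))) ≠ ⊤ := by
    intro h
    rw [hsplit1, h] at E1
    simp at E1
  have htsum1 : Summable (fun m : ℕ => t (m + 1)) := by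
    have := ENNReal.summable_toReal hA_ne_top
    exact this.congr (fun m => ENNReal.toReal_ofReal (htnn _))
  have hXnn : 0 ≤ ∑' m : ℕ, t (m + 1) := tsum_nonneg (fun m => htnn _)
  have htval1 : ∑' m : ℕ, t (m + 1) = EH - 1 := by
    have hof : ENNReal.ofReal (∑' m : ℕ, t (m + 1)) = ∑' m : ℕ, ENNReal.ofReal (t (m + 1)) :=
      ENNReal.ofReal_tsum_of_nonneg (fun m => htnn _) htsum1
    have : ENNReal.ofReal EH = ENNReal.ofReal (1 + ∑' m : ℕ, t (m + 1)) := by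
      rw [ENNReal.ofReal_add (by norm_num) hXnn, ← E1, hsplit1, ht0, hof]
    have := (ENNReal.ofReal_eq_ofReal_iff (by linarith) (by linarith)).1 this
    linarith
  -- mean of t
  have hsplit2 : ∑' m : ℕ, (m : ENNReal) * ENNReal.ofReal (t m)
      = ((0:ℕ) : ENNReal) * ENNReal.ofReal (t 0)
        + ∑' m : ℕ, ((m + 1 : ℕ) : ENNReal) * ENNReal.ofReal (t (m + 1)) :=
    tsum_eq_zero_add' ENNReal.summable
  have hterm : ∀ m : ℕ, ((m + 1 : ℕ) : ENNReal) * ENNReal.ofReal (t (m + 1))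
      = ENNReal.ofReal (((m : ℝ) + 1) * t (m + 1)) := by
    intro m
    rw [ENNReal.ofReal_mul (by positivity)]
    congr 1
    rw [ENNReal.ofReal_add (Nat.cast_nonneg m) (by norm_num)]
    push_cast
    simp [ENNReal.ofReal_natCast]
  have hB : ∑' m : ℕ, ENNReal.ofReal (((m : ℝ) + 1) * t (m + 1)) = ENNReal.ofReal (S2 / 2) := by
    rw [← tsum_congr hterm]
    rw [← E2, hsplit2]
    simp
  have hB_ne_top : (∑' m : ℕ, ENNReal.ofReal (((m : ℝ) + 1) * t (m + 1))) ≠ ⊤ := by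
    rw [hB]; exact ENNReal.ofReal_ne_top
  have hmtnn : ∀ m : ℕ, 0 ≤ ((m : ℝ) + 1) * t (m + 1) :=
    fun m => mul_nonneg (by positivity) (htnn _)
  have htsum2 : Summable (fun m : ℕ => ((m : ℝ) + 1) * t (m + 1)) := by
    have := ENNReal.summable_toReal hB_ne_top
    exact this.congr (fun m => ENNReal.toReal_ofReal (hmtnn m))
  have htval2 : ∑' m : ℕ, ((m : ℝ) + 1) * t (m + 1) = S2 / 2 := by
    have hof : ENNReal.ofReal (∑' m : ℕ, ((m : ℝ) + 1) * t (m + 1))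
        = ∑' m : ℕ, ENNReal.ofReal (((m : ℝ) + 1) * t (m + 1)) :=
      ENNReal.ofReal_tsum_of_nonneg hmtnn htsum2
    have := hof.trans hB
    exact (ENNReal.ofReal_eq_ofReal_iff (tsum_nonneg hmtnn) (by positivity)).1 this
  -- p shifts
  have hpsum1 : Summable (fun m : ℕ => p (m + 1)) := (summable_nat_add_iff 1).2 hps
  have hpval1 : ∑' m : ℕ, p (m + 1) = 1 := by
    have := tsum_eq_zero_add' (f := p) hpsum1
    rw [hsum, hp0, zero_add] at this
    exact this.symm
  have hpmsum : Summable (fun m : ℕ => ((m : ℝ) + 1) * p (m + 1)) := by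
    have := (summable_nat_add_iff (f := fun n : ℕ => (n : ℝ) * p n) 1).2 hmean
    exact this.congr (fun m => by push_cast; ring)
  have hpmval : ∑' m : ℕ, ((m : ℝ) + 1) * p (m + 1) = EH := by
    have h := tsum_eq_zero_add' (f := fun n : ℕ => (n : ℝ) * p n) (by
      have := (summable_nat_add_iff (f := fun n : ℕ => (n : ℝ) * p n) 1).2 hmean
      exact this)
    rw [← hEH] at h
    simp only [Nat.cast_zero, zero_mul, zero_add] at h
    rw [h]
    exact tsum_congr (fun m => by push_cast; ring)
  -- now the final assembly
  have hrdecomp : ∀ m : ℕ, r (m + 1)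
      = p (m + 1) * (1 / EHPR) + t (m + 1) * (1 / ((1 - ρ) * EHPR)) := by
    intro m
    rw [hr]
    ring
  have hrsum : Summable (fun m : ℕ => r (m + 1)) := by
    apply Summable.congr ((hpsum1.mul_right _).add (htsum1.mul_right _))
    intro m
    exact (hrdecomp m).symm
  have hrmdecomp : ∀ m : ℕ, ((m : ℝ) + 1) * r (m + 1)
      = ((m : ℝ) + 1) * p (m + 1) * (1 / EHPR)
        + ((m : ℝ) + 1) * t (m + 1) * (1 / ((1 - ρ) * EHPR)) := by
    intro m
    rw [hr]
    ring
  constructor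
  · rw [tsum_congr hrdecomp, Summable.tsum_add (hpsum1.mul_right _) (htsum1.mul_right _),
      tsum_mul_right, tsum_mul_right, hpval1, htval1, hEHPR]
    field_simp
    ring
  · rw [tsum_congr hrmdecomp, Summable.tsum_add (hpmsum.mul_right _) (htsum2.mul_right _),
      tsum_mul_right, tsum_mul_right, hpmval, htval2, hEHt, hEHPR]
    have hEHne : EH ≠ 0 := ne_of_gt hEHpos
    field_simp
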